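/- Let W̃ be a Darboux transformation of W with D = VN ∈ D(W) as in the definition. Then V·D(W̃)·N ⊆ D(W) and N·D(W)·V ⊆ D(W̃). -/

import Mathlib

open Polynomial Matrix MeasureTheory
open scoped ComplexOrder

/-- Matrix polynomials: square matrices with polynomial entries. -/
abbrev MatP (n : Type*) := Matrix n n (Polynomial ℂ)

section MatFramework
variable {n : Type*} [Fintype n] [DecidableEq n]

/-- Entrywise `j`-th derivative of a matrix polynomial. -/
noncomputable def derivIter (j : ℕ) (P : MatP n) : MatP n :=
  P.map (fun p => Polynomial.derivative^[j] p)

/-- Right action of the differential operator `∑_j ∂^j F j` on a matrix polynomial: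
`P · D = ∑_j P^{(j)} F_j`. -/
noncomputable def actOp (F : ℕ →₀ MatP n) (P : MatP n) : MatP n :=
  F.sum fun j Fj => derivIter j P * Fj

/-- A map on matrix polynomials is a matrix differential operator with polynomial
coefficients if it is given by some `∑_j ∂^j F_j`. -/
def IsDiffOp (L : MatP n → MatP n) : Prop :=
  ∃ F : ℕ →₀ MatP n, ∀ P, L P = actOp F P

/-- Degree of a matrix polynomial: the sup of the degrees of its entries. -/
noncomputable def matDeg (P : MatP n) : WithBot ℕ :=
  Finset.univ.sup fun ij : n × n => (P ij.1 ij.2).degree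

/-- A differential operator is degree-preserving if `deg (P · V) = deg P` for all `P`. -/
def DegPres (L : MatP n → MatP n) : Prop :=
  IsDiffOp L ∧ ∀ P, matDeg (L P) = matDeg P

/-- Natural-number degree of a matrix polynomial. -/
noncomputable def matNatDeg (P : MatP n) : ℕ :=
  Finset.univ.sup fun ij : n × n => (P ij.1 ij.2).natDegree

/-- Leading coefficient of a matrix polynomial. -/
noncomputable def matLead (P : MatP n) : Matrix n n ℂ :=
  Matrix.of fun i j => (P i j).coeff (matNatDeg P)

/-- Evaluation of a matrix polynomial at a real point. -/
noncomputable def evalMP (P : MatP n) (x : ℝ) : Matrix n n ℂ :=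
  Matrix.of fun i j => (P i j).eval (x : ℂ)

/-- The matrix-valued inner product `⟨P,Q⟩ = ∫_S P(x) W(x) Q(x)^* dx`. -/
noncomputable def wInner (S : Set ℝ) (W : ℝ → Matrix n n ℂ) (P Q : MatP n) :
    Matrix n n ℂ :=
  Matrix.of fun i j => ∫ x in S, (evalMP P x * W x * (evalMP Q x)ᴴ) i j

/-- `W` is a weight matrix supported on `S`: positive definite on `S` with finite moments. -/
def IsWeight (S : Set ℝ) (W : ℝ → Matrix n n ℂ) : Prop :=
  MeasurableSet S ∧ volume S ≠ 0 ∧ (∀ x ∈ S, (W x).PosDef) ∧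
  ∀ (k : ℕ) (i j : n), IntegrableOn (fun x => ‖W x i j‖ * |x| ^ k) S

/-- `P` is the sequence of monic orthogonal matrix polynomials for the weight `W` on `S`. -/
def MonicOPS (S : Set ℝ) (W : ℝ → Matrix n n ℂ) (P : ℕ → MatP n) : Prop :=
  (∀ k, matNatDeg (P k) = k) ∧
  (∀ k, (Matrix.of fun i j => ((P k) i j).coeff k) = (1 : Matrix n n ℂ)) ∧
  (∀ k l, k ≠ l → wInner S W (P k) (P l) = 0)

/-- Membership in the algebra `D(W)`: a differential operator having the (monic orthogonal)
polynomials `P_k` as eigenfunctions with matrix eigenvalues. -/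
def InDW (P : ℕ → MatP n) (L : MatP n → MatP n) : Prop :=
  IsDiffOp L ∧ ∀ k, ∃ Λ : Matrix n n ℂ, L (P k) = Λ.map Polynomial.C * P k

/-- `Pt` (the monic OPS of `W̃`) is obtained from `P` (the monic OPS of `W`) by a Darboux
transformation: some `D = V N ∈ D(W)` with `V, N` degree-preserving and
`P_k · V = A_k P̃_k`, `A_k` nonsingular. -/
def IsDarbouxPair (P Pt : ℕ → MatP n) : Prop :=
  ∃ V Nd : MatP n → MatP n, DegPres V ∧ DegPres Nd ∧
    InDW P (fun Q => Nd (V Q)) ∧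
    ∀ k, ∃ A : Matrix n n ℂ, IsUnit A ∧ V (P k) = A.map Polynomial.C * Pt k

end MatFramework

section Aux
variable {n : Type*} [Fintype n] [DecidableEq n]

lemma derivIter_succ (j : ℕ) (P : MatP n) :
    derivIter (j + 1) P = derivIter 1 (derivIter j P) := by
  ext i k
  simp [derivIter, Function.iterate_succ_apply']

lemma derivIter_one_mul (P Q : MatP n) :
    derivIter 1 (P * Q) = derivIter 1 P * Q + P * derivIter 1 Q := by
  refine Matrix.ext fun i k => ?_
  simp only [derivIter, Matrix.map_apply, Matrix.add_apply, Matrix.mul_apply,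
    Function.iterate_one]
  rw [Polynomial.derivative_sum]
  rw [← Finset.sum_add_distrib]
  refine Finset.sum_congr rfl fun l _ => ?_
  exact Polynomial.derivative_mul

lemma derivIter_one_constMap (M : Matrix n n ℂ) :
    derivIter 1 (M.map Polynomial.C : MatP n) = 0 := by
  ext i k
  simp [derivIter]

lemma derivIter_constMap_mul (M : Matrix n n ℂ) (j : ℕ) (Q : MatP n) :
    derivIter j (M.map Polynomial.C * Q) = M.map Polynomial.C * derivIter j Q := by
  induction j with
  | zero => simp [derivIter]
  | succ j ih =>
      rw [derivIter_succ j (M.map Polynomial.C * Q), ih, derivIter_one_mul,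
        derivIter_one_constMap, zero_mul, zero_add, derivIter_succ j Q]

lemma actOp_constMap_mul (F : ℕ →₀ MatP n) (M : Matrix n n ℂ) (Q : MatP n) :
    actOp F (M.map Polynomial.C * Q) = M.map Polynomial.C * actOp F Q := by
  unfold actOp
  rw [Finsupp.sum, Finsupp.sum, Finset.mul_sum]
  exact Finset.sum_congr rfl fun j _ => by
    rw [derivIter_constMap_mul, mul_assoc]

lemma isDiffOp_constMap_mul {L : MatP n → MatP n} (hL : IsDiffOp L)
    (M : Matrix n n ℂ) (Q : MatP n) :
    L (M.map Polynomial.C * Q) = M.map Polynomial.C * L Q := by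
  obtain ⟨F, hF⟩ := hL
  rw [hF, hF, actOp_constMap_mul]

lemma actOp_add_left (F G : ℕ →₀ MatP n) (P : MatP n) :
    actOp (F + G) P = actOp F P + actOp G P :=
  Finsupp.sum_add_index' (fun j => mul_zero _) (fun j a b => mul_add _ _ _)

lemma actOp_single (j : ℕ) (M : MatP n) (P : MatP n) :
    actOp (Finsupp.single j M) P = derivIter j P * M := by
  unfold actOp
  exact Finsupp.sum_single_index (mul_zero _)

lemma isDiffOp_add {L₁ L₂ : MatP n → MatP n} (h₁ : IsDiffOp L₁) (h₂ : IsDiffOp L₂) :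
    IsDiffOp (fun P => L₁ P + L₂ P) := by
  obtain ⟨F, hF⟩ := h₁
  obtain ⟨G, hG⟩ := h₂
  exact ⟨F + G, fun P => by show L₁ P + L₂ P = _; rw [hF, hG, actOp_add_left]⟩

lemma isDiffOp_mulRight {L : MatP n → MatP n} (hL : IsDiffOp L) (M : MatP n) :
    IsDiffOp (fun P => L P * M) := by
  obtain ⟨F, hF⟩ := hL
  refine ⟨F.mapRange (· * M) (zero_mul M), fun P => ?_⟩
  show L P * M = _
  rw [hF]
  unfold actOp
  rw [Finsupp.sum_mapRange_index (fun j => mul_zero _), Finsupp.sum, Finsupp.sum,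
    Finset.sum_mul]
  exact Finset.sum_congr rfl fun j _ => mul_assoc _ _ _

lemma isDiffOp_deriv_one {L : MatP n → MatP n} (hL : IsDiffOp L) :
    IsDiffOp (fun P => derivIter 1 (L P)) := by
  obtain ⟨F, hF⟩ := hL
  refine ⟨F.mapDomain (· + 1) + F.mapRange (derivIter 1) (by ext i k; simp [derivIter]), fun P => ?_⟩
  show derivIter 1 (L P) = _
  rw [hF, actOp_add_left]
  unfold actOp
  rw [Finsupp.sum_mapDomain_index (fun j => mul_zero _) (fun j a b => mul_add _ _ _),
    Finsupp.sum_mapRange_index (fun j => by rw [mul_zero])]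
  rw [Finsupp.sum, Finsupp.sum, Finsupp.sum, ← Finset.sum_add_distrib]
  have : derivIter 1 (∑ j ∈ F.support, derivIter j P * F j)
      = ∑ j ∈ F.support, derivIter 1 (derivIter j P * F j) := by
    refine Matrix.ext fun i k => ?_
    simp only [derivIter, Matrix.map_apply, Function.iterate_one, Matrix.sum_apply]
    rw [Polynomial.derivative_sum]
  rw [this]
  refine Finset.sum_congr rfl fun j _ => ?_
  rw [derivIter_one_mul, ← derivIter_succ]

lemma isDiffOp_derivIter {L : MatP n → MatP n} (hL : IsDiffOp L) (j : ℕ) :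
    IsDiffOp (fun P => derivIter j (L P)) := by
  induction j with
  | zero =>
      obtain ⟨F, hF⟩ := hL
      exact ⟨F, fun P => by show derivIter 0 (L P) = _; rw [show derivIter 0 (L P) = L P from rfl, hF]⟩
  | succ j ih =>
      have := isDiffOp_deriv_one ih
      refine ⟨this.choose, fun P => ?_⟩
      show derivIter (j + 1) (L P) = _
      rw [derivIter_succ j (L P), ← this.choose_spec P]

lemma isDiffOp_actOp_comp (F : ℕ →₀ MatP n) {L : MatP n → MatP n} (hL : IsDiffOp L) :
    IsDiffOp (fun P => actOp F (L P)) := by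
  induction F using Finsupp.induction with
  | zero =>
      refine ⟨0, fun P => ?_⟩
      show actOp 0 (L P) = _
      rw [show actOp (0 : ℕ →₀ MatP n) (L P) = 0 from Finsupp.sum_zero_index,
        show actOp (0 : ℕ →₀ MatP n) P = 0 from Finsupp.sum_zero_index]
  | single_add j M G hj hM ih =>
      have h1 : IsDiffOp (fun P => derivIter j (L P) * M) :=
        isDiffOp_mulRight (isDiffOp_derivIter hL j) M
      have h2 := isDiffOp_add h1 ih
      obtain ⟨H, hH⟩ := h2
      refine ⟨H, fun P => ?_⟩
      show actOp _ (L P) = _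
      rw [actOp_add_left, actOp_single, ← hH]

lemma isDiffOp_comp {L₁ L₂ : MatP n → MatP n} (h₁ : IsDiffOp L₁) (h₂ : IsDiffOp L₂) :
    IsDiffOp (fun P => L₂ (L₁ P)) := by
  obtain ⟨F, hF⟩ := h₂
  obtain ⟨H, hH⟩ := isDiffOp_actOp_comp F h₁
  exact ⟨H, fun P => by show L₂ (L₁ P) = _; rw [hF, ← hH]⟩

lemma constMap_mul (A B : Matrix n n ℂ) :
    ((A * B).map Polynomial.C : MatP n) = A.map Polynomial.C * B.map Polynomial.C :=
  Matrix.map_mul (f := Polynomial.C)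

end Aux

/-- If `W̃` is a Darboux transformation of `W` via `D = V N ∈ D(W)`, then
`V · D(W̃) · N ⊆ D(W)` and `N · D(W) · V ⊆ D(W̃)`.  (For right-acting operators,
`P · (V A N) = N-image of (A-image of (P · V))`.) -/
theorem stmt8 {n : Type*} [Fintype n] [DecidableEq n]
    (S : Set ℝ) (W Wt : ℝ → Matrix n n ℂ)
    (hW : IsWeight S W) (hWt : IsWeight S Wt)
    (P Pt : ℕ → MatP n) (hP : MonicOPS S W P) (hPt : MonicOPS S Wt Pt)
    (V Nd : MatP n → MatP n) (hV : DegPres V) (hN : DegPres Nd)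
    (hD : InDW P (fun Q => Nd (V Q)))
    (hA : ∀ k, ∃ A : Matrix n n ℂ, IsUnit A ∧ V (P k) = A.map Polynomial.C * Pt k) :
    (∀ A : MatP n → MatP n, InDW Pt A → InDW P (fun Q => Nd (A (V Q)))) ∧
    (∀ A : MatP n → MatP n, InDW P A → InDW Pt (fun Q => V (A (Nd Q)))) := by
  obtain ⟨hDop, hDeig⟩ := hD
  obtain ⟨hVop, _⟩ := hV
  obtain ⟨hNop, _⟩ := hN
  -- Key fact: Nd (Pt k) = (A_k⁻¹ * Λ_k).map C * P k
  have key : ∀ k, ∃ (Ak Λk : Matrix n n ℂ) (u : (Matrix n n ℂ)ˣ), (u : Matrix n n ℂ) = Ak ∧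
      V (P k) = Ak.map Polynomial.C * Pt k ∧
      Nd (Pt k) = ((↑u⁻¹ : Matrix n n ℂ) * Λk).map Polynomial.C * P k := by
    intro k
    obtain ⟨Λk, hΛ⟩ := hDeig k
    obtain ⟨Ak, hAu, hAeq⟩ := hA k
    refine ⟨Ak, Λk, hAu.unit, rfl, hAeq, ?_⟩
    have h1 : Nd (V (P k)) = Λk.map Polynomial.C * P k := hΛ
    rw [hAeq, isDiffOp_constMap_mul hNop] at h1
    have h2 : ((↑hAu.unit⁻¹ : Matrix n n ℂ)).map Polynomial.C * (Ak.map Polynomial.C * Nd (Pt k))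
        = ((↑hAu.unit⁻¹ : Matrix n n ℂ)).map Polynomial.C * (Λk.map Polynomial.C * P k) := by
      rw [h1]
    rw [← mul_assoc, ← constMap_mul, ← mul_assoc, ← constMap_mul] at h2
    have h3 : (↑hAu.unit⁻¹ : Matrix n n ℂ) * Ak = 1 := by
      have := hAu.unit.inv_mul
      simpa [hAu.unit_spec] using this
    rw [h3, Matrix.map_one _ (map_zero _) (map_one _), one_mul] at h2
    exact h2
  constructor
  · intro A ⟨hAop, hAeig⟩
    refine ⟨isDiffOp_comp (isDiffOp_comp hVop hAop) hNop, fun k => ?_⟩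
    obtain ⟨Ak, Λk, u, hu, hVP, hNPt⟩ := key k
    obtain ⟨Γ, hΓ⟩ := hAeig k
    refine ⟨Ak * Γ * ((↑u⁻¹ : Matrix n n ℂ) * Λk), ?_⟩
    show Nd (A (V (P k))) = _
    rw [hVP, isDiffOp_constMap_mul hAop, hΓ, ← mul_assoc, ← constMap_mul,
      isDiffOp_constMap_mul hNop, hNPt, ← mul_assoc, ← constMap_mul]
  · intro A ⟨hAop, hAeig⟩
    refine ⟨isDiffOp_comp (isDiffOp_comp hNop hAop) hVop, fun k => ?_⟩
    obtain ⟨Ak, Λk, u, hu, hVP, hNPt⟩ := key k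
    obtain ⟨Γ, hΓ⟩ := hAeig k
    refine ⟨(↑u⁻¹ : Matrix n n ℂ) * Λk * Γ * Ak, ?_⟩
    show V (A (Nd (Pt k))) = _
    rw [hNPt, isDiffOp_constMap_mul hAop, hΓ, ← mul_assoc, ← constMap_mul,
      isDiffOp_constMap_mul hVop, hVP, ← mul_assoc, ← constMap_mul]
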